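/- Span bound for the martingale increments: under the generalized concentrability condition Γ_F = sup_x ∑_{i=1}^∞ IPM_F(P^i(x,·),π) < ∞ and f_l ∈ M_l·F bounded with span sp(f_l), the function g_i(x_0^{i−1}, x) := ∑_{l=0}^{i−1} f_l(x_l) + f_i(x) + ∑_{l=i+1}^{n−1} E_x[f_l(X_l)] satisfies, for all x_0^i, inf_{x} g_i(x_0^{i−1},x) ≤ g_i(x_0^i) ≤ inf_x g_i(x_0^{i−1},x) + A_i with A_i := 2 M_{i+1}^max Γ_F + sp(f_i), where M_{i+1}^max = max{M_{i+1},...,M_{n−1}} (and 0 if i+1 ≥ n). -/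

import Mathlib

open MeasureTheory ProbabilityTheory ENNReal

noncomputable def IPM {X : Type*} [MeasurableSpace X] (F : Set (X → ℝ))
    (μ ν : Measure X) : ℝ≥0∞ :=
  ⨆ f : F, ENNReal.ofReal |∫ x, (f : X → ℝ) x ∂μ - ∫ x, (f : X → ℝ) x ∂ν|

noncomputable def finMax (M : ℕ → ℝ) (i n : ℕ) : ℝ :=
  WithBot.unbotD 0 ((Finset.Ico i n).sup fun l => ((M l : ℝ) : WithBot ℝ))

lemma le_finMax (M : ℕ → ℝ) {i n l : ℕ} (hl : l ∈ Finset.Ico i n) :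
    M l ≤ finMax M i n := by
  have h := Finset.le_sup (f := fun l => ((M l : ℝ) : WithBot ℝ)) hl
  unfold finMax
  cases hs : (Finset.Ico i n).sup fun l => ((M l : ℝ) : WithBot ℝ) with
  | bot => rw [hs] at h; exact absurd h (by simp)
  | coe r => rw [hs] at h; simpa using h

theorem span_bound_martingale_increments
    {S : Type*} [MeasurableSpace S] [Nonempty S]
    (P : Kernel S S) [IsMarkovKernel P]
    (F : Set (S → ℝ)) (π : Measure S) [IsProbabilityMeasure π]
    (hinv : π.bind (fun x => P x) = π)
    (Γ : ℝ≥0∞)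
    (hΓdef : Γ = ⨆ x : S, ∑' i : ℕ,
      IPM F ((fun ν => ν.bind (fun y => P y))^[i+1] (Measure.dirac x)) π)
    (hΓ : Γ ≠ ⊤)
    (n : ℕ) (f : ℕ → S → ℝ) (hfmeas : ∀ l, Measurable (f l))
    (a b : ℕ → ℝ) (hfab : ∀ l x, f l x ∈ Set.Icc (a l) (b l))
    (M : ℕ → ℝ) (hM : ∀ l, 0 < M l) (hMF : ∀ l < n, (fun x => f l x / M l) ∈ F)
    (i : ℕ) (hi : i < n)
    (g : (Fin i → S) → S → ℝ)
    (hgdef : ∀ xs x, g xs x = (∑ l : Fin i, f l (xs l)) + f i x +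
      ∑ l ∈ Finset.Ico (i+1) n,
        ∫ y, f l y ∂((fun ν => ν.bind (fun z => P z))^[l - i] (Measure.dirac x))) :
    ∀ (xs : Fin i → S) (x : S),
      (⨅ y, g xs y) ≤ g xs x ∧
      g xs x ≤ (⨅ y, g xs y) + (2 * finMax M (i+1) n * Γ.toReal + (b i - a i)) := by
  set T : Measure S → Measure S := fun ν => ν.bind (fun z => P z) with hT
  -- iterates of dirac are probability measures
  have hprob : ∀ (j : ℕ) (x : S), IsProbabilityMeasure (T^[j] (Measure.dirac x)) := by
    intro j x
    induction j with
    | zero => simpa using (by infer_instance : IsProbabilityMeasure (Measure.dirac x))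
    | succ k ih =>
      rw [Function.iterate_succ_apply']
      constructor
      rw [hT]
      simp only
      rw [Measure.bind_apply MeasurableSet.univ P.measurable.aemeasurable]
      simp [measure_univ, @lintegral_one S _ _, ih.measure_univ]
  -- integrability of bounded measurable functions
  have hint : ∀ (l : ℕ) (μ : Measure S), IsProbabilityMeasure μ → Integrable (f l) μ := by
    intro l μ hμ
    refine (integrable_const (max |a l| |b l|)).mono' (hfmeas l).aestronglyMeasurable ?_
    filter_upwards with x
    rw [Real.norm_eq_abs]
    exact abs_le_max_abs_abs (hfab l x).1 (hfab l x).2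
  -- IPM bound on each term of tail sum
  have hIPMle : ∀ (x : S) (j : ℕ), IPM F (T^[j+1] (Measure.dirac x)) π ≤ Γ := by
    intro x j
    rw [hΓdef]
    exact le_trans (ENNReal.le_tsum j) (le_iSup _ x)
  -- key pointwise bound
  have hkey : ∀ (l : ℕ), l ∈ Finset.Ico (i+1) n → ∀ x y : S,
      |(∫ z, f l z ∂(T^[l-i] (Measure.dirac x))) - ∫ z, f l z ∂(T^[l-i] (Measure.dirac y))|
        ≤ M l * ((IPM F (T^[l-i] (Measure.dirac x)) π
            + IPM F (T^[l-i] (Measure.dirac y)) π).toReal) := by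
    intro l hl x y
    simp only [Finset.mem_Ico] at hl
    have hfl : (fun x => f l x / M l) ∈ F := hMF l hl.2
    have hMl := hM l
    have habs : ∀ z : S, IPM F (T^[l-i] (Measure.dirac z)) π ≠ ⊤ := by
      intro z
      have h1 : l - i = (l - i - 1) + 1 := by omega
      rw [h1]
      exact ne_top_of_le_ne_top hΓ (hIPMle z _)
    have hstep : ∀ z : S,
        |(∫ w, f l w / M l ∂(T^[l-i] (Measure.dirac z))) - ∫ w, f l w / M l ∂π|
          ≤ (IPM F (T^[l-i] (Measure.dirac z)) π).toReal := by
      intro z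
      have h2 : ENNReal.ofReal
          |(∫ w, f l w / M l ∂(T^[l-i] (Measure.dirac z))) - ∫ w, f l w / M l ∂π|
            ≤ IPM F (T^[l-i] (Measure.dirac z)) π :=
        le_iSup (fun (φ : F) => ENNReal.ofReal
          |(∫ w, (φ : S → ℝ) w ∂(T^[l-i] (Measure.dirac z))) - ∫ w, (φ : S → ℝ) w ∂π|)
          (⟨_, hfl⟩ : F)
      have := ENNReal.toReal_mono (habs z) h2
      rwa [ENNReal.toReal_ofReal (abs_nonneg _)] at this
    have hdiv : ∀ (μ : Measure S), (∫ w, f l w / M l ∂μ) = (∫ w, f l w ∂μ) / M l := by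
      intro μ; exact integral_div (M l) (f l)
    have hx := hstep x
    have hy := hstep y
    rw [hdiv, hdiv] at hx hy
    rw [show (∫ w, f l w / M l ∂π) = (∫ w, f l w ∂π) / M l from hdiv π] at hstep
    have htR : (IPM F (T^[l-i] (Measure.dirac x)) π
        + IPM F (T^[l-i] (Measure.dirac y)) π).toReal
        = (IPM F (T^[l-i] (Measure.dirac x)) π).toReal
          + (IPM F (T^[l-i] (Measure.dirac y)) π).toReal :=
      ENNReal.toReal_add (habs x) (habs y)
    rw [htR]
    set A := ∫ z, f l z ∂(T^[l-i] (Measure.dirac x))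
    set B := ∫ z, f l z ∂(T^[l-i] (Measure.dirac y))
    set C := (∫ w, f l w ∂π) / M l
    have : |A - B| = M l * |A / M l - B / M l| := by
      rw [div_sub_div_same, abs_div, abs_of_pos hMl]
      field_simp
    rw [this]
    have h3 : |A / M l - B / M l| ≤ |A / M l - C| + |B / M l - C| := by
      calc |A / M l - B / M l| = |(A / M l - C) - (B / M l - C)| := by ring_nf
        _ ≤ |A / M l - C| + |B / M l - C| := abs_sub _ _
    exact mul_le_mul_of_nonneg_left (h3.trans (add_le_add hx hy)) hMl.le
  -- tail sum of IPMs bounded by Γ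
  have hsumΓ : ∀ x : S,
      (∑ l ∈ Finset.Ico (i+1) n, IPM F (T^[l-i] (Measure.dirac x)) π) ≤ Γ := by
    intro x
    rw [Finset.sum_Ico_eq_sum_range]
    have hre : ∀ k, (i + 1 + k) - i = k + 1 := by intro k; omega
    calc ∑ k ∈ Finset.range (n - (i+1)), IPM F (T^[(i+1+k)-i] (Measure.dirac x)) π
        = ∑ k ∈ Finset.range (n - (i+1)), IPM F (T^[k+1] (Measure.dirac x)) π := by
          refine Finset.sum_congr rfl fun k _ => by rw [hre k]
      _ ≤ ∑' k : ℕ, IPM F (T^[k+1] (Measure.dirac x)) π := ENNReal.sum_le_tsum _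
      _ ≤ Γ := by
          rw [hΓdef]
          exact le_iSup (fun x => ∑' (k : ℕ), IPM F (T^[k+1] (Measure.dirac x)) π) x
  -- the uniform gap bound
  set K := finMax M (i+1) n with hK
  set A := 2 * K * Γ.toReal + (b i - a i) with hA
  intro xs x
  have hgap : ∀ x y : S, g xs x ≤ g xs y + A := by
    intro x y
    rw [hgdef, hgdef]
    have h1 : f i x - f i y ≤ b i - a i := by
      have := (hfab i x).2; have := (hfab i y).1; linarith
    have h2 : (∑ l ∈ Finset.Ico (i+1) n,
          ∫ z, f l z ∂(T^[l-i] (Measure.dirac x)))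
        - (∑ l ∈ Finset.Ico (i+1) n,
          ∫ z, f l z ∂(T^[l-i] (Measure.dirac y))) ≤ 2 * K * Γ.toReal := by
      rcases Finset.eq_empty_or_nonempty (Finset.Ico (i+1) n) with he | hne
      · have hK0 : K = 0 := by rw [hK]; unfold finMax; rw [he]; simp
        simp [he, hK0]
      · have hK0 : 0 < K := by
          obtain ⟨l, hl⟩ := hne
          exact lt_of_lt_of_le (hM l) (le_finMax M hl)
        have hterm : ∀ l ∈ Finset.Ico (i+1) n,
            (∫ z, f l z ∂(T^[l-i] (Measure.dirac x)))
              - (∫ z, f l z ∂(T^[l-i] (Measure.dirac y)))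
            ≤ K * ((IPM F (T^[l-i] (Measure.dirac x)) π
                + IPM F (T^[l-i] (Measure.dirac y)) π).toReal) := by
          intro l hl
          have h3 := hkey l hl x y
          have h4 : M l ≤ K := le_finMax M hl
          have h5 := abs_nonneg ((∫ z, f l z ∂(T^[l-i] (Measure.dirac x)))
              - ∫ z, f l z ∂(T^[l-i] (Measure.dirac y)))
          have h6 : (0:ℝ) ≤ (IPM F (T^[l-i] (Measure.dirac x)) π
                + IPM F (T^[l-i] (Measure.dirac y)) π).toReal := ENNReal.toReal_nonneg
          nlinarith [le_abs_self ((∫ z, f l z ∂(T^[l-i] (Measure.dirac x)))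
              - ∫ z, f l z ∂(T^[l-i] (Measure.dirac y)))]
        have hfin : ∀ l ∈ Finset.Ico (i+1) n,
            IPM F (T^[l-i] (Measure.dirac x)) π
              + IPM F (T^[l-i] (Measure.dirac y)) π ≠ ⊤ := by
          intro l hl
          simp only [Finset.mem_Ico] at hl
          have h1 : l - i = (l - i - 1) + 1 := by omega
          rw [h1]
          exact ENNReal.add_ne_top.mpr
            ⟨ne_top_of_le_ne_top hΓ (hIPMle x _), ne_top_of_le_ne_top hΓ (hIPMle y _)⟩
        calc (∑ l ∈ Finset.Ico (i+1) n, ∫ z, f l z ∂(T^[l-i] (Measure.dirac x)))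
              - ∑ l ∈ Finset.Ico (i+1) n, ∫ z, f l z ∂(T^[l-i] (Measure.dirac y))
            = ∑ l ∈ Finset.Ico (i+1) n, ((∫ z, f l z ∂(T^[l-i] (Measure.dirac x)))
                - ∫ z, f l z ∂(T^[l-i] (Measure.dirac y))) := (Finset.sum_sub_distrib _ _).symm
          _ ≤ ∑ l ∈ Finset.Ico (i+1) n, K * ((IPM F (T^[l-i] (Measure.dirac x)) π
                + IPM F (T^[l-i] (Measure.dirac y)) π).toReal) :=
              Finset.sum_le_sum hterm
          _ = K * ∑ l ∈ Finset.Ico (i+1) n, ((IPM F (T^[l-i] (Measure.dirac x)) π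
                + IPM F (T^[l-i] (Measure.dirac y)) π).toReal) := by
              rw [Finset.mul_sum]
          _ = K * (∑ l ∈ Finset.Ico (i+1) n, (IPM F (T^[l-i] (Measure.dirac x)) π
                + IPM F (T^[l-i] (Measure.dirac y)) π)).toReal := by
              rw [ENNReal.toReal_sum hfin]
          _ ≤ K * (2 * Γ).toReal := by
              refine mul_le_mul_of_nonneg_left ?_ hK0.le
              refine ENNReal.toReal_mono (ENNReal.mul_ne_top (by norm_num) hΓ) ?_
              rw [Finset.sum_add_distrib, two_mul]
              exact add_le_add (hsumΓ x) (hsumΓ y)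
          _ = 2 * K * Γ.toReal := by
              rw [ENNReal.toReal_mul, ENNReal.toReal_ofNat]; ring
    linarith
  have hbdd : BddBelow (Set.range (g xs)) := by
    obtain ⟨x₀⟩ := (inferInstance : Nonempty S)
    refine ⟨g xs x₀ - A, ?_⟩
    rintro _ ⟨y, rfl⟩
    linarith [hgap x₀ y]
  constructor
  · exact ciInf_le hbdd x
  · have : g xs x - A ≤ ⨅ y, g xs y := le_ciInf fun y => by linarith [hgap x y]
    linarith
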